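/- Let {u_n} be a sequence in L²(ℝ²) converging pointwise a.e. to some u ∈ L²(ℝ²) with u ≠ 0, and let {v_n} be bounded in L²(ℝ²) with sup_n ∫∫ log(1+|x-y|) u_n(x)² v_n(y)² dx dy < ∞. Then there exist n₀ ∈ ℕ and C > 0 such that ∫ log(1+|x|) v_n(x)² dx < C for all n ≥ n₀. -/

import Mathlib

open MeasureTheory Filter

private lemma log_tri (R : ℝ) (hR : 0 ≤ R) (x y : EuclideanSpace ℝ (Fin 2)) (hx : ‖x‖ ≤ R) :
    Real.log (1 + ‖y‖) - Real.log (1 + R) ≤ Real.log (1 + ‖x - y‖) := by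
  have h1 : (0:ℝ) < 1 + R := by linarith
  have h2 : (0:ℝ) < 1 + ‖x - y‖ := by positivity
  have hyx : ‖y‖ - ‖x‖ ≤ ‖x - y‖ := by
    have := norm_sub_norm_le y x
    rwa [norm_sub_rev] at this
  have h3 : 1 + ‖y‖ ≤ (1 + R) * (1 + ‖x - y‖) := by
    nlinarith [norm_nonneg (x - y), norm_nonneg x]
  have h4 : Real.log (1 + ‖y‖) ≤ Real.log ((1 + R) * (1 + ‖x - y‖)) :=
    Real.log_le_log (by positivity) h3
  rw [Real.log_mul h1.ne' h2.ne'] at h4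
  linarith

theorem stmt_13 (u v : ℕ → EuclideanSpace ℝ (Fin 2) → ℝ) (U : EuclideanSpace ℝ (Fin 2) → ℝ)
    (hu : ∀ n, MemLp (u n) 2 volume) (hU : MemLp U 2 volume)
    (hU0 : ¬ U =ᵐ[volume] (0 : EuclideanSpace ℝ (Fin 2) → ℝ))
    (hconv : ∀ᵐ x ∂volume, Tendsto (fun n => u n x) atTop (nhds (U x)))
    (hv : ∀ n, MemLp (v n) 2 volume)
    (hvb : ∃ M : ℝ, ∀ n, ∫ x, (v n x) ^ 2 ≤ M)
    (hB : ∃ K : ℝ, ∀ n,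
      ∫⁻ z : EuclideanSpace ℝ (Fin 2) × EuclideanSpace ℝ (Fin 2),
        ENNReal.ofReal (Real.log (1 + ‖z.1 - z.2‖) * (u n z.1) ^ 2 * (v n z.2) ^ 2)
        ≤ ENNReal.ofReal K) :
    ∃ n₀ : ℕ, ∃ C : ℝ, 0 < C ∧ ∀ n ≥ n₀,
      ∫⁻ x, ENNReal.ofReal (Real.log (1 + ‖x‖) * (v n x) ^ 2) < ENNReal.ofReal C := by
  obtain ⟨M, hM⟩ := hvb
  obtain ⟨K, hK⟩ := hB
  -- measurable representative of U
  have hUm : AEMeasurable U volume := hU.aestronglyMeasurable.aemeasurable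
  set U' : EuclideanSpace ℝ (Fin 2) → ℝ := hUm.mk U with hU'def
  have hU'meas : Measurable U' := hUm.measurable_mk
  have hUeq : U =ᵐ[volume] U' := hUm.ae_eq_mk
  -- a set A of positive finite measure, inside a ball, where |U'| ≥ δ
  set S : ℕ → Set (EuclideanSpace ℝ (Fin 2)) := fun k =>
    {x | 1 / ((k : ℝ) + 1) ≤ |U' x|} ∩ Metric.closedBall 0 ((k : ℝ) + 1) with hSdef
  have hSmeas : ∀ k, MeasurableSet (S k) := fun k =>
    (measurableSet_le measurable_const hU'meas.abs).inter measurableSet_closedBall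
  have hex : ∃ k, 0 < volume (S k) := by
    by_contra h
    push_neg at h
    have hz : ∀ k, volume (S k) = 0 := fun k => le_antisymm (h k) zero_le
    apply hU0
    have hsub : {x | U' x ≠ 0} ⊆ ⋃ k, S k := by
      intro x hx
      have hax : 0 < |U' x| := abs_pos.mpr hx
      obtain ⟨k₁, hk₁⟩ := exists_nat_ge (1 / |U' x|)
      obtain ⟨k₂, hk₂⟩ := exists_nat_ge ‖x‖
      set m : ℕ := max k₁ k₂ with hmdef
      have hm1 : (k₁ : ℝ) ≤ (m : ℝ) := by exact_mod_cast Nat.le_max_left k₁ k₂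
      have hm2 : (k₂ : ℝ) ≤ (m : ℝ) := by exact_mod_cast Nat.le_max_right k₁ k₂
      refine Set.mem_iUnion.mpr ⟨m, ?_, ?_⟩
      · have h1 : 1 / |U' x| ≤ (m : ℝ) + 1 := by linarith
        exact (one_div_le hax (by positivity)).mp h1
      · rw [Metric.mem_closedBall, dist_zero_right]
        linarith
    have hz2 : volume {x | U' x ≠ 0} = 0 :=
      le_antisymm (le_trans (measure_mono hsub) (le_of_eq (measure_iUnion_null hz))) zero_le
    have : U' =ᵐ[volume] (0 : EuclideanSpace ℝ (Fin 2) → ℝ) := by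
      rw [Filter.EventuallyEq, ae_iff]
      exact hz2
    exact hUeq.trans this
  obtain ⟨k, hApos⟩ := hex
  set δ : ℝ := 1 / ((k : ℝ) + 1) with hδdef
  have hδpos : 0 < δ := by positivity
  set R : ℝ := (k : ℝ) + 1 with hRdef
  have hRpos : (0:ℝ) < R := by positivity
  set A : Set (EuclideanSpace ℝ (Fin 2)) := S k with hAdef
  have hAmeas : MeasurableSet A := hSmeas k
  have hAfin : volume A < ⊤ :=
    lt_of_le_of_lt (measure_mono (Set.inter_subset_right)) measure_closedBall_lt_top
  -- Fatou argument
  set c : ENNReal := ENNReal.ofReal (δ ^ 2) * volume A with hcdef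
  have hc0 : c ≠ 0 := by
    apply mul_ne_zero
    · exact (ENNReal.ofReal_pos.mpr (by positivity)).ne'
    · exact hApos.ne'
  have hctop : c ≠ ⊤ := ENNReal.mul_ne_top ENNReal.ofReal_ne_top hAfin.ne
  have humeas : ∀ n, AEMeasurable (fun x => ENNReal.ofReal ((u n x) ^ 2))
      (volume.restrict A) := fun n =>
    (ENNReal.measurable_ofReal.comp_aemeasurable
      (((hu n).aestronglyMeasurable.aemeasurable.pow_const 2))).restrict
  have hfatou : c ≤ liminf (fun n => ∫⁻ x in A, ENNReal.ofReal ((u n x) ^ 2)) atTop := by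
    have h1 : c ≤ ∫⁻ x in A, liminf (fun n => ENNReal.ofReal ((u n x) ^ 2)) atTop := by
      have h2 : ∀ᵐ x ∂(volume.restrict A),
          ENNReal.ofReal (δ ^ 2) ≤ liminf (fun n => ENNReal.ofReal ((u n x) ^ 2)) atTop := by
        filter_upwards [ae_restrict_of_ae hconv, ae_restrict_of_ae hUeq,
          ae_restrict_mem hAmeas] with x hx hxe hxA
        have htend : Tendsto (fun n => ENNReal.ofReal ((u n x) ^ 2)) atTop
            (nhds (ENNReal.ofReal ((U x) ^ 2))) :=
          (ENNReal.continuous_ofReal.tendsto _).comp (hx.pow 2)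
        rw [htend.liminf_eq]
        apply ENNReal.ofReal_le_ofReal
        have hδU : δ ≤ |U' x| := hxA.1
        calc δ ^ 2 ≤ |U' x| ^ 2 := by nlinarith
          _ = (U' x) ^ 2 := sq_abs _
          _ = (U x) ^ 2 := by rw [hxe]
      calc c = ∫⁻ _ in A, ENNReal.ofReal (δ ^ 2) := by
              rw [setLIntegral_const, hcdef]
        _ ≤ _ := lintegral_mono_ae h2
    exact h1.trans (lintegral_liminf_le' humeas)
  have hhalf : c / 2 < liminf (fun n => ∫⁻ x in A, ENNReal.ofReal ((u n x) ^ 2)) atTop :=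
    lt_of_lt_of_le (ENNReal.half_lt_self hc0 hctop) hfatou
  have hev : ∀ᶠ n in atTop, c / 2 < ∫⁻ x in A, ENNReal.ofReal ((u n x) ^ 2) :=
    eventually_lt_of_lt_liminf hhalf
  obtain ⟨n₀, hn₀⟩ := eventually_atTop.mp hev
  -- the cut-off logarithm
  set φ : EuclideanSpace ℝ (Fin 2) → ℝ :=
    fun y => max (Real.log (1 + ‖y‖) - Real.log (1 + R)) 0 with hφdef
  have hφnn : ∀ y, 0 ≤ φ y := fun y => le_max_right _ _
  have hφmeas : Measurable φ :=
    (((Real.measurable_log.comp ((continuous_const.add continuous_norm).measurable)).sub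
      measurable_const).max measurable_const)
  have hφle : ∀ y, Real.log (1 + ‖y‖) ≤ φ y + Real.log (1 + R) := fun y => by
    rcases le_max_iff.mpr (Or.inl (le_refl (Real.log (1 + ‖y‖) - Real.log (1 + R)))) with h
    have := le_max_left (Real.log (1 + ‖y‖) - Real.log (1 + R)) 0
    linarith
  have hlogR : 0 ≤ Real.log (1 + R) := Real.log_nonneg (by linarith)
  -- main estimate for each n ≥ n₀
  set I : ℕ → ENNReal := fun n => ∫⁻ y, ENNReal.ofReal (φ y * (v n y) ^ 2) with hIdef
  have hvmeas : ∀ n, AEMeasurable (v n) volume := fun n => (hv n).aestronglyMeasurable.aemeasurable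
  have hImeas : ∀ n, AEMeasurable (fun y => ENNReal.ofReal (φ y * (v n y) ^ 2)) volume :=
    fun n => ENNReal.measurable_ofReal.comp_aemeasurable
      ((hφmeas.aemeasurable.mul ((hvmeas n).pow_const 2)))
  have hkey : ∀ n, (∫⁻ x in A, ENNReal.ofReal ((u n x) ^ 2)) * I n ≤ ENNReal.ofReal K := by
    intro n
    have humeasf : AEMeasurable (fun z : EuclideanSpace ℝ (Fin 2) × EuclideanSpace ℝ (Fin 2) =>
        u n z.1) ((volume : Measure (EuclideanSpace ℝ (Fin 2))).prod volume) :=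
      (hu n).aestronglyMeasurable.aemeasurable.comp_quasiMeasurePreserving
        Measure.quasiMeasurePreserving_fst
    have hvmeasf : AEMeasurable (fun z : EuclideanSpace ℝ (Fin 2) × EuclideanSpace ℝ (Fin 2) =>
        v n z.2) ((volume : Measure (EuclideanSpace ℝ (Fin 2))).prod volume) :=
      (hvmeas n).comp_quasiMeasurePreserving Measure.quasiMeasurePreserving_snd
    have hlogmeas : Measurable (fun z : EuclideanSpace ℝ (Fin 2) × EuclideanSpace ℝ (Fin 2) =>
        Real.log (1 + ‖z.1 - z.2‖)) :=
      Real.measurable_log.comp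
        ((continuous_const.add (continuous_fst.sub continuous_snd).norm).measurable)
    have hFmeas : AEMeasurable
        (fun z : EuclideanSpace ℝ (Fin 2) × EuclideanSpace ℝ (Fin 2) =>
          ENNReal.ofReal (Real.log (1 + ‖z.1 - z.2‖) * (u n z.1) ^ 2 * (v n z.2) ^ 2))
        ((volume : Measure (EuclideanSpace ℝ (Fin 2))).prod volume) :=
      ENNReal.measurable_ofReal.comp_aemeasurable
        (((hlogmeas.aemeasurable.mul (humeasf.pow_const 2)).mul (hvmeasf.pow_const 2)))
    have hton : (∫⁻ z : EuclideanSpace ℝ (Fin 2) × EuclideanSpace ℝ (Fin 2),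
        ENNReal.ofReal (Real.log (1 + ‖z.1 - z.2‖) * (u n z.1) ^ 2 * (v n z.2) ^ 2))
        = ∫⁻ x, ∫⁻ y, ENNReal.ofReal
            (Real.log (1 + ‖x - y‖) * (u n x) ^ 2 * (v n y) ^ 2) := by
      rw [MeasureTheory.Measure.volume_eq_prod]
      exact lintegral_prod _ hFmeas
    calc (∫⁻ x in A, ENNReal.ofReal ((u n x) ^ 2)) * I n
        = ∫⁻ x in A, ENNReal.ofReal ((u n x) ^ 2) * I n :=
          (lintegral_mul_const'' _ (humeas n)).symm
      _ = ∫⁻ x in A, ∫⁻ y, ENNReal.ofReal ((u n x) ^ 2) * ENNReal.ofReal (φ y * (v n y) ^ 2) := by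
          refine lintegral_congr fun x => ?_
          exact (lintegral_const_mul' _ _ ENNReal.ofReal_ne_top).symm
      _ ≤ ∫⁻ x in A, ∫⁻ y, ENNReal.ofReal
            (Real.log (1 + ‖x - y‖) * (u n x) ^ 2 * (v n y) ^ 2) := by
          refine lintegral_mono_ae ?_
          filter_upwards [ae_restrict_mem hAmeas] with x hxA
          refine lintegral_mono fun y => ?_
          rw [← ENNReal.ofReal_mul (sq_nonneg _)]
          apply ENNReal.ofReal_le_ofReal
          have hxR : ‖x‖ ≤ R := by
            have := hxA.2
            rwa [Metric.mem_closedBall, dist_zero_right] at this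
          have hφy : φ y ≤ Real.log (1 + ‖x - y‖) := by
            apply max_le
            · exact log_tri R hRpos.le x y hxR
            · exact Real.log_nonneg (by have := norm_nonneg (x - y); linarith)
          nlinarith [sq_nonneg (u n x), sq_nonneg (v n y), hφnn y,
            mul_le_mul_of_nonneg_right hφy (sq_nonneg (u n x))]
      _ ≤ ∫⁻ x, ∫⁻ y, ENNReal.ofReal
            (Real.log (1 + ‖x - y‖) * (u n x) ^ 2 * (v n y) ^ 2) :=
          setLIntegral_le_lintegral _ _
      _ = ∫⁻ z : EuclideanSpace ℝ (Fin 2) × EuclideanSpace ℝ (Fin 2),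
            ENNReal.ofReal (Real.log (1 + ‖z.1 - z.2‖) * (u n z.1) ^ 2 * (v n z.2) ^ 2) :=
          hton.symm
      _ ≤ ENNReal.ofReal K := hK n
  have hIbound : ∀ n ≥ n₀, I n ≤ ENNReal.ofReal K / (c / 2) := by
    intro n hn
    rw [ENNReal.le_div_iff_mul_le
      (Or.inl (by simp [ENNReal.div_eq_zero_iff, hc0, hctop]))
      (Or.inl (by simp [ENNReal.div_eq_top, hc0, hctop]))]
    calc I n * (c / 2) ≤ I n * (∫⁻ x in A, ENNReal.ofReal ((u n x) ^ 2)) :=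
          mul_le_mul_right (hn₀ n hn).le _
      _ = (∫⁻ x in A, ENNReal.ofReal ((u n x) ^ 2)) * I n := mul_comm _ _
      _ ≤ ENNReal.ofReal K := hkey n
  -- bound ∫ v² in lintegral form
  have hvint : ∀ n, (∫⁻ x, ENNReal.ofReal ((v n x) ^ 2)) ≤ ENNReal.ofReal M := by
    intro n
    rw [← ofReal_integral_eq_lintegral_ofReal (hv n).integrable_sq
      (Filter.Eventually.of_forall fun x => sq_nonneg _)]
    exact ENNReal.ofReal_le_ofReal (hM n)
  -- final bound
  set B : ENNReal := ENNReal.ofReal K / (c / 2) + ENNReal.ofReal (Real.log (1 + R)) *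
    ENNReal.ofReal M with hBdef
  have hBfin : B ≠ ⊤ := by
    apply ENNReal.add_ne_top.mpr
    constructor
    · exact (ENNReal.div_lt_top ENNReal.ofReal_ne_top
        (by simp [ENNReal.div_eq_zero_iff, hc0, hctop])).ne
    · exact ENNReal.mul_ne_top ENNReal.ofReal_ne_top ENNReal.ofReal_ne_top
  refine ⟨n₀, B.toReal + 1, by positivity, fun n hn => ?_⟩
  have hT : (∫⁻ x, ENNReal.ofReal (Real.log (1 + ‖x‖) * (v n x) ^ 2)) ≤ B := by
    calc (∫⁻ x, ENNReal.ofReal (Real.log (1 + ‖x‖) * (v n x) ^ 2))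
        ≤ ∫⁻ x, (ENNReal.ofReal (φ x * (v n x) ^ 2) +
            ENNReal.ofReal (Real.log (1 + R) * (v n x) ^ 2)) := by
          refine lintegral_mono fun x => ?_
          calc ENNReal.ofReal (Real.log (1 + ‖x‖) * (v n x) ^ 2)
              ≤ ENNReal.ofReal (φ x * (v n x) ^ 2 + Real.log (1 + R) * (v n x) ^ 2) := by
                apply ENNReal.ofReal_le_ofReal
                have := hφle x
                nlinarith [sq_nonneg (v n x)]
            _ ≤ _ := ENNReal.ofReal_add_le
      _ = I n + ∫⁻ x, ENNReal.ofReal (Real.log (1 + R) * (v n x) ^ 2) := by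
          rw [lintegral_add_right']
          exact ENNReal.measurable_ofReal.comp_aemeasurable
            ((aemeasurable_const.mul ((hvmeas n).pow_const 2)))
      _ ≤ ENNReal.ofReal K / (c / 2) +
            ENNReal.ofReal (Real.log (1 + R)) * ENNReal.ofReal M := by
          apply add_le_add (hIbound n hn)
          calc (∫⁻ x, ENNReal.ofReal (Real.log (1 + R) * (v n x) ^ 2))
              = ∫⁻ x, ENNReal.ofReal (Real.log (1 + R)) * ENNReal.ofReal ((v n x) ^ 2) := by
                refine lintegral_congr fun x => ?_
                rw [← ENNReal.ofReal_mul hlogR]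
            _ = ENNReal.ofReal (Real.log (1 + R)) * ∫⁻ x, ENNReal.ofReal ((v n x) ^ 2) :=
                lintegral_const_mul' _ _ ENNReal.ofReal_ne_top
            _ ≤ _ := mul_le_mul_right (hvint n) _
      _ = B := rfl
  refine lt_of_le_of_lt hT ?_
  calc B = ENNReal.ofReal B.toReal := (ENNReal.ofReal_toReal hBfin).symm
    _ < ENNReal.ofReal (B.toReal + 1) := by
        rw [ENNReal.ofReal_lt_ofReal_iff (by positivity)]
        linarith
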